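/- Let a Unique Games instance on a d-regular weighted graph G on n vertices (adjacency matrix A, so all eigenvalues of A are at most d) have label-extended adjacency matrix M. Let 0 < θ < γ ≤ 1 and let S be the span of the eigenvectors of A with eigenvalue greater than (1−γ)d, with P_S the orthogonal projection onto S. If w ∈ ℝ^{nk} is a unit vector with wᵀ M w ≥ (1−θ)d (in particular, any unit eigenvector of M with eigenvalue at least (1−θ)d), then the block-norm vector w̄ ∈ ℝ^n defined by w̄_u = ‖w_u‖₂ is a unit vector satisfying ‖w̄ − P_S w̄‖ ≤ √(θ/γ). -/

import Mathlib

open Matrix Finset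

/-- For a Unique Games instance on a `d`-regular weighted graph with
adjacency matrix `A`, if a unit vector `x ∈ ℝ^{nk}` has `xᵀ M x ≥ (1−θ)d` (e.g. a
unit eigenvector of `M` with eigenvalue at least `(1−θ)d`), then the block-norm vector
`x̄` is a unit vector with `‖x̄ − P_S x̄‖ ≤ √(θ/γ)`, where `S` is the span of
eigenvectors of `A` with eigenvalue greater than `(1−γ)d` and `0 < θ < γ ≤ 1`. -/
theorem block_norm_vector_close_to_top_eigenspace
    {n k : ℕ} (w : Fin n → Fin n → ℝ) (d θ γ : ℝ)
    (hd : 0 < d) (hθ : 0 < θ) (hθγ : θ < γ) (hγ : γ ≤ 1)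
    (π : Fin n → Fin n → Equiv.Perm (Fin k))
    (hw_symm : ∀ u v, w u v = w v u)
    (hw_nonneg : ∀ u v, 0 ≤ w u v)
    (hπ_symm : ∀ u v, π v u = (π u v)⁻¹)
    (hreg : ∀ u, ∑ v, w u v = d)
    (A : Matrix (Fin n) (Fin n) ℝ) (hA : ∀ u v, A u v = w u v)
    (M : Matrix (Fin n × Fin k) (Fin n × Fin k) ℝ)
    (hM : ∀ p q, M p q = w p.1 q.1 * (if π p.1 q.1 p.2 = q.2 then 1 else 0))
    (S : Submodule ℝ (EuclideanSpace ℝ (Fin n)))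
    (hS : S = Submodule.span ℝ {φ : EuclideanSpace ℝ (Fin n) |
        φ ≠ 0 ∧ ∃ μ : ℝ, (1 - γ) * d < μ ∧ A.mulVec φ = μ • φ})
    (x : EuclideanSpace ℝ (Fin n × Fin k)) (hx : ‖x‖ = 1)
    (hquad : (1 - θ) * d ≤ x ⬝ᵥ M.mulVec x)
    (xbar : EuclideanSpace ℝ (Fin n))
    (hxbar : ∀ u, xbar u = Real.sqrt (∑ i, (x (u, i)) ^ 2)) :
    ‖xbar‖ = 1 ∧
    ‖xbar - (S.orthogonalProjectionOnto xbar : EuclideanSpace ℝ (Fin n))‖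
      ≤ Real.sqrt (θ / γ) := by
  classical
  have hγ0 : 0 < γ := hθ.trans hθγ
  -- x has unit sum of squares
  have hxsum : ∑ p : Fin n × Fin k, x p ^ 2 = 1 := by
    rw [EuclideanSpace.norm_eq] at hx
    simp only [Real.norm_eq_abs, sq_abs] at hx
    exact Real.sqrt_eq_one.mp hx
  have hxbar_sq : ∀ u, xbar u ^ 2 = ∑ i, x (u, i) ^ 2 := by
    intro u
    rw [hxbar u, Real.sq_sqrt (by positivity)]
  have hxbarsum : ∑ u, xbar u ^ 2 = 1 := by
    simp_rw [hxbar_sq]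
    rw [← hxsum, Fintype.sum_prod_type]
  have hxbarnorm : ‖xbar‖ = 1 := by
    rw [EuclideanSpace.norm_eq]
    simp only [Real.norm_eq_abs, sq_abs]
    rw [hxbarsum, Real.sqrt_one]
  refine ⟨hxbarnorm, ?_⟩
  -- Expand the M quadratic form
  have hMexp : x ⬝ᵥ M.mulVec x
      = ∑ u, ∑ v, w u v * ∑ i, x (u, i) * x (v, π u v i) := by
    simp only [dotProduct, mulVec, hM, Fintype.sum_prod_type]
    simp only [ite_mul, one_mul, zero_mul, mul_ite, mul_zero, Finset.sum_ite_eq]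
    simp only [Finset.mem_univ, if_true, Finset.mul_sum]
    rw [Finset.sum_congr rfl fun u (_ : u ∈ Finset.univ) => Finset.sum_comm]
    exact Finset.sum_congr rfl fun u _ => Finset.sum_congr rfl fun v _ =>
      Finset.sum_congr rfl fun i _ => by ring
  -- bound by the A quadratic form on xbar
  have hAbound : x ⬝ᵥ M.mulVec x ≤ xbar ⬝ᵥ A.mulVec xbar := by
    rw [hMexp]
    have hA' : xbar ⬝ᵥ A.mulVec xbar = ∑ u, ∑ v, w u v * (xbar u * xbar v) := by
      simp only [dotProduct, mulVec, hA, Finset.mul_sum]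
      exact Finset.sum_congr rfl fun u _ => Finset.sum_congr rfl fun v _ => by ring
    rw [hA']
    refine Finset.sum_le_sum fun u _ => Finset.sum_le_sum fun v _ => ?_
    refine mul_le_mul_of_nonneg_left ?_ (hw_nonneg u v)
    have hcs := Real.sum_mul_le_sqrt_mul_sqrt Finset.univ
      (fun i => x (u, i)) (fun i => x (v, π u v i))
    rw [hxbar u, hxbar v]
    refine hcs.trans (le_of_eq ?_)
    congr 2
    exact Fintype.sum_equiv (π u v) _ _ fun i => rfl
  -- quadratic form of A is at most d * ∑ y²
  have hquad_le : ∀ y : Fin n → ℝ, y ⬝ᵥ A.mulVec y ≤ d * ∑ u, y u ^ 2 := by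
    intro y
    have h1 : y ⬝ᵥ A.mulVec y = ∑ u, ∑ v, w u v * (y u * y v) := by
      simp only [dotProduct, mulVec, hA, Finset.mul_sum]
      exact Finset.sum_congr rfl fun u _ => Finset.sum_congr rfl fun v _ => by ring
    rw [h1]
    have h2 : ∑ u, ∑ v, w u v * (y u * y v)
        ≤ ∑ u, ∑ v, w u v * ((y u ^ 2 + y v ^ 2) / 2) := by
      refine Finset.sum_le_sum fun u _ => Finset.sum_le_sum fun v _ => ?_
      refine mul_le_mul_of_nonneg_left ?_ (hw_nonneg u v)
      nlinarith [sq_nonneg (y u - y v)]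
    have h4 : ∑ u, ∑ v, w u v * y u ^ 2 = d * ∑ u, y u ^ 2 := by
      rw [Finset.mul_sum]
      refine Finset.sum_congr rfl fun u _ => ?_
      rw [← Finset.sum_mul, hreg u]
    have hcol : ∀ v, ∑ u, w u v = d := by
      intro v
      rw [Finset.sum_congr rfl fun u _ => hw_symm u v]
      exact hreg v
    have h5 : ∑ u, ∑ v, w u v * y v ^ 2 = d * ∑ u, y u ^ 2 := by
      rw [Finset.sum_comm, Finset.mul_sum]
      refine Finset.sum_congr rfl fun v _ => ?_
      rw [← Finset.sum_mul, hcol v]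
    have h3 : ∑ u, ∑ v, w u v * ((y u ^ 2 + y v ^ 2) / 2)
        = (∑ u, ∑ v, w u v * y u ^ 2) / 2 + (∑ u, ∑ v, w u v * y v ^ 2) / 2 := by
      simp_rw [Finset.sum_div, ← Finset.sum_add_distrib]
      exact Finset.sum_congr rfl fun u _ => Finset.sum_congr rfl fun v _ => by ring
    refine h2.trans (le_of_eq ?_)
    rw [h3, h4, h5]; ring
  -- spectral decomposition
  have hherm : A.IsHermitian := by
    show Aᴴ = A
    ext u v
    simp only [conjTranspose_apply, star_trivial, hA]
    exact (hw_symm u v).symm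
  set B := hherm.eigenvectorBasis with hB
  set lam := hherm.eigenvalues with hlam
  set c : Fin n → ℝ := fun i => (inner ℝ (B i) xbar : ℝ) with hc
  have hexp : ∑ i, c i • (B i) = xbar := B.sum_repr' xbar
  have hBnorm : ∀ i, ∑ u, (B i) u ^ 2 = 1 := by
    intro i
    have h := B.orthonormal.1 i
    rw [EuclideanSpace.norm_eq] at h
    simp only [Real.norm_eq_abs, sq_abs] at h
    exact Real.sqrt_eq_one.mp h
  -- eigenvalues at most d
  have hlam_le : ∀ i, lam i ≤ d := by
    intro i
    have h := hquad_le (B i)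
    have heig : A.mulVec (B i) = lam i • (B i : Fin n → ℝ) :=
      hherm.mulVec_eigenvectorBasis i
    have he : (B i : Fin n → ℝ) ⬝ᵥ A.mulVec (B i) = lam i := by
      rw [heig]
      simp only [dotProduct, PiLp.smul_apply, Pi.smul_apply, smul_eq_mul]
      rw [Finset.sum_congr rfl (fun u _ => by ring :
        ∀ u ∈ Finset.univ, B i u * (lam i * B i u) = lam i * B i u ^ 2),
        ← Finset.mul_sum, hBnorm i, mul_one]
    rw [he, hBnorm i, mul_one] at h
    exact h
  -- the quadratic form in terms of eigenvalues
  have hTB : ∀ i, (Matrix.toEuclideanLin A) (B i) = lam i • B i := fun i => by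
    apply WithLp.ofLp_injective; exact hherm.mulVec_eigenvectorBasis i
  have hinner_dot : ∀ y : EuclideanSpace ℝ (Fin n),
      y ⬝ᵥ A.mulVec y = (inner ℝ y ((Matrix.toEuclideanLin A) y) : ℝ) := by
    intro y
    simp only [PiLp.inner_apply, RCLike.inner_apply, conj_trivial, dotProduct]
    exact Finset.sum_congr rfl fun u _ => mul_comm _ _
  have key : xbar ⬝ᵥ A.mulVec xbar = ∑ i, lam i * c i ^ 2 := by
    rw [hinner_dot xbar]
    conv_lhs => rw [← hexp]
    rw [map_sum]
    simp only [LinearMap.map_smul, hTB]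
    rw [inner_sum]
    refine Finset.sum_congr rfl fun i _ => ?_
    rw [inner_smul_right, inner_smul_right, real_inner_comm]
    rw [hexp]
    rw [show (inner ℝ (B i) xbar : ℝ) = c i from rfl]
    ring
  -- Parseval
  have hpar : ∑ i, c i ^ 2 = 1 := by
    have h := B.repr.norm_map xbar
    rw [hxbarnorm, EuclideanSpace.norm_eq] at h
    simp only [Real.norm_eq_abs, sq_abs] at h
    have h2 := Real.sqrt_eq_one.mp h
    rw [← h2]
    refine Finset.sum_congr rfl fun i _ => ?_
    rw [B.repr_apply_apply]
  -- the top eigenspace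
  set T : Finset (Fin n) := Finset.univ.filter (fun i => (1 - γ) * d < lam i) with hT
  have hBS : ∀ i ∈ T, (B i : EuclideanSpace ℝ (Fin n)) ∈ S := by
    intro i hi
    rw [hS]
    refine Submodule.subset_span ?_
    refine ⟨B.orthonormal.ne_zero i, lam i, (Finset.mem_filter.mp hi).2, ?_⟩
    exact hherm.mulVec_eigenvectorBasis i
  set v : EuclideanSpace ℝ (Fin n) := ∑ i ∈ T, c i • B i with hv
  have hvS : v ∈ S := Submodule.sum_mem S fun i hi => Submodule.smul_mem S _ (hBS i hi)
  have hdiff : xbar - v = ∑ i ∈ Tᶜ, c i • (B i : EuclideanSpace ℝ (Fin n)) := by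
    rw [← hexp, hv, ← Finset.sum_add_sum_compl T (fun i => c i • (B i))]
    abel
  -- norm of the residual
  have hnormdiff : ‖xbar - v‖ ^ 2 = ∑ i ∈ Tᶜ, c i ^ 2 := by
    rw [hdiff, ← real_inner_self_eq_norm_sq]
    rw [B.orthonormal.inner_sum]
    refine Finset.sum_congr rfl fun i _ => ?_
    simp [sq]
  -- key inequality
  have hs_le : ∑ i ∈ Tᶜ, c i ^ 2 ≤ θ / γ := by
    have h0 : (1 - θ) * d ≤ ∑ i, lam i * c i ^ 2 := by
      rw [← key]; exact hquad.trans hAbound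
    have hsplit : ∑ i ∈ T, c i ^ 2 + ∑ i ∈ Tᶜ, c i ^ 2 = 1 := by
      rw [Finset.sum_add_sum_compl]; exact hpar
    have hQsplit : ∑ i, lam i * c i ^ 2
        = ∑ i ∈ T, lam i * c i ^ 2 + ∑ i ∈ Tᶜ, lam i * c i ^ 2 :=
      (Finset.sum_add_sum_compl T _).symm
    have hb1 : ∑ i ∈ T, lam i * c i ^ 2 ≤ d * ∑ i ∈ T, c i ^ 2 := by
      rw [Finset.mul_sum]
      exact Finset.sum_le_sum fun i _ =>
        mul_le_mul_of_nonneg_right (hlam_le i) (sq_nonneg _)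
    have hb2 : ∑ i ∈ Tᶜ, lam i * c i ^ 2 ≤ (1 - γ) * d * ∑ i ∈ Tᶜ, c i ^ 2 := by
      rw [Finset.mul_sum]
      refine Finset.sum_le_sum fun i hi => ?_
      have : ¬ ((1 - γ) * d < lam i) := by
        intro hcon
        exact (Finset.mem_compl.mp hi) (Finset.mem_filter.mpr ⟨Finset.mem_univ i, hcon⟩)
      exact mul_le_mul_of_nonneg_right (not_lt.mp this) (sq_nonneg _)
    have hsnn : 0 ≤ ∑ i ∈ Tᶜ, c i ^ 2 := Finset.sum_nonneg fun i _ => sq_nonneg _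
    have hTsum : ∑ i ∈ T, c i ^ 2 = 1 - ∑ i ∈ Tᶜ, c i ^ 2 := by linarith
    have h6 : γ * (∑ i ∈ Tᶜ, c i ^ 2) * d ≤ θ * d := by
      nlinarith [h0, hQsplit, hb1, hb2, hTsum]
    have h7 : γ * (∑ i ∈ Tᶜ, c i ^ 2) ≤ θ := le_of_mul_le_mul_right h6 hd
    rw [le_div_iff₀ hγ0]
    linarith [h7]
  -- conclude via minimality of orthogonal projection
  have hproj : ‖xbar - (S.orthogonalProjectionOnto xbar : EuclideanSpace ℝ (Fin n))‖
      ≤ ‖xbar - v‖ := by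
    rw [← Submodule.starProjection_apply, Submodule.starProjection_minimal]
    exact ciInf_le ⟨0, by rintro a ⟨y, rfl⟩; exact norm_nonneg _⟩ (⟨v, hvS⟩ : S)
  refine hproj.trans ?_
  rw [show ‖xbar - v‖ = Real.sqrt (‖xbar - v‖ ^ 2) from
    (Real.sqrt_sq (norm_nonneg _)).symm, hnormdiff]
  exact Real.sqrt_le_sqrt hs_le
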